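/- Let (A(t))_{t∈ℕ} be a sequence of n×n row-stochastic real matrices and δ with 0 < δ < 1 such that min⁺ A(t) ≥ δ for all t. Let 0 < t_0 < t_1 < ... be a strictly increasing sequence of natural numbers and a > 0 a real number such that t_{i+1} − t_i ≤ a·log(log(i+3)) for all i ∈ ℕ. Then ∑_{i=0}^∞ min⁺ A(t_{i+1}, t_i) = ∞, where A(t_{i+1}, t_i) := A(t_{i+1}−1)···A(t_i) is the backward accumulation; i.e., a growth of the intercommunication intervals as quick as log(log(i)) still guarantees the divergence hypothesis of the convergence theorem. -/

import Mathlib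

open Matrix Filter Topology

/-- Backward accumulation `A(t,s) = A(t-1) * A(t-2) * ⋯ * A(s)`
(with `backAcc A s s` the identity matrix). -/
def backAcc {n : ℕ} (A : ℕ → Matrix (Fin n) (Fin n) ℝ) (s t : ℕ) :
    Matrix (Fin n) (Fin n) ℝ :=
  ((List.range' s (t - s)).reverse.map A).prod

/-- A matrix is row-stochastic if all entries are nonnegative and every row
sums to `1`. -/
def RowStochastic {n : ℕ} (A : Matrix (Fin n) (Fin n) ℝ) : Prop :=
  (∀ i j, 0 ≤ A i j) ∧ ∀ i, ∑ j, A i j = 1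

/-- `minPos A` is the smallest positive entry of `A`. -/
noncomputable def minPos {n : ℕ} (A : Matrix (Fin n) (Fin n) ℝ) : ℝ :=
  sInf {x : ℝ | 0 < x ∧ ∃ i j, A i j = x}

/-- The set of positive entries is finite. -/
lemma posSet_finite {n : ℕ} (A : Matrix (Fin n) (Fin n) ℝ) :
    {x : ℝ | 0 < x ∧ ∃ i j, A i j = x}.Finite := by
  apply Set.Finite.subset (Set.finite_range (fun p : Fin n × Fin n => A p.1 p.2))
  rintro x ⟨-, i, j, rfl⟩
  exact ⟨(i, j), rfl⟩

lemma minPos_le {n : ℕ} (A : Matrix (Fin n) (Fin n) ℝ) {i j : Fin n}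
    (h : 0 < A i j) : minPos A ≤ A i j :=
  csInf_le (posSet_finite A).bddBelow ⟨h, i, j, rfl⟩

/-- A row-stochastic matrix (with `0 < n`) has a positive entry. -/
lemma posSet_nonempty {n : ℕ} (hn : 0 < n) {A : Matrix (Fin n) (Fin n) ℝ}
    (hA : RowStochastic A) :
    {x : ℝ | 0 < x ∧ ∃ i j, A i j = x}.Nonempty := by
  obtain ⟨i⟩ : Nonempty (Fin n) := ⟨⟨0, hn⟩⟩
  have h1 : (0:ℝ) < ∑ j, A i j := by rw [hA.2 i]; norm_num
  obtain ⟨j, -, hj⟩ : ∃ j ∈ Finset.univ, 0 < A i j := by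
    by_contra h
    push_neg at h
    have : ∑ j, A i j ≤ 0 := Finset.sum_nonpos fun j _ => h j (Finset.mem_univ j)
    linarith
  exact ⟨A i j, hj, i, j, rfl⟩

lemma le_minPos {n : ℕ} (hn : 0 < n) {A : Matrix (Fin n) (Fin n) ℝ}
    (hA : RowStochastic A) {b : ℝ}
    (hb : ∀ i j, 0 < A i j → b ≤ A i j) : b ≤ minPos A := by
  apply le_csInf (posSet_nonempty hn hA)
  rintro x ⟨hx, i, j, rfl⟩
  exact hb i j hx

lemma RowStochastic.mul {n : ℕ} {B C : Matrix (Fin n) (Fin n) ℝ}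
    (hB : RowStochastic B) (hC : RowStochastic C) : RowStochastic (B * C) := by
  constructor
  · intro i j
    rw [Matrix.mul_apply]
    exact Finset.sum_nonneg fun k _ => mul_nonneg (hB.1 i k) (hC.1 k j)
  · intro i
    simp only [Matrix.mul_apply]
    rw [Finset.sum_comm]
    calc ∑ k, ∑ j, B i k * C k j = ∑ k, B i k * ∑ j, C k j := by
          simp [Finset.mul_sum]
      _ = 1 := by simp only [hC.2]; simpa using hB.2 i

lemma RowStochastic.one {n : ℕ} : RowStochastic (1 : Matrix (Fin n) (Fin n) ℝ) := by
  constructor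
  · intro i j
    by_cases h : i = j <;> simp [Matrix.one_apply, h]
  · intro i
    simp [Matrix.one_apply]

lemma minPos_mul {n : ℕ} (hn : 0 < n) {B C : Matrix (Fin n) (Fin n) ℝ}
    (hB : RowStochastic B) (hC : RowStochastic C) {b c : ℝ}
    (hb : 0 ≤ b) (hc : 0 ≤ c) (hB' : b ≤ minPos B) (hC' : c ≤ minPos C) :
    b * c ≤ minPos (B * C) := by
  apply le_minPos hn (hB.mul hC)
  intro i j hpos
  rw [Matrix.mul_apply] at hpos ⊢
  obtain ⟨k, -, hk⟩ : ∃ k ∈ Finset.univ, 0 < B i k * C k j := by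
    by_contra h
    push_neg at h
    have : ∑ k, B i k * C k j ≤ 0 :=
      Finset.sum_nonpos fun k _ => h k (Finset.mem_univ k)
    linarith
  have hBik : 0 < B i k := by
    rcases (hB.1 i k).lt_or_eq with h | h
    · exact h
    · simp [← h] at hk
  have hCkj : 0 < C k j := by
    rcases (hC.1 k j).lt_or_eq with h | h
    · exact h
    · simp [← h] at hk
  calc b * c ≤ B i k * C k j := by
        have := (hB'.trans (minPos_le B hBik))
        have := (hC'.trans (minPos_le C hCkj))
        exact mul_le_mul ‹b ≤ B i k› ‹c ≤ C k j› hc (by linarith [hBik])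
    _ ≤ ∑ k, B i k * C k j := by
        apply Finset.single_le_sum (f := fun k => B i k * C k j)
          (fun k _ => mul_nonneg (hB.1 i k) (hC.1 k j)) (Finset.mem_univ k)

lemma backAcc_succ {n : ℕ} (A : ℕ → Matrix (Fin n) (Fin n) ℝ) {s u : ℕ}
    (h : s ≤ u) : backAcc A s (u + 1) = A u * backAcc A s u := by
  unfold backAcc
  have h1 : u + 1 - s = (u - s) + 1 := by omega
  have h2 : s + (u - s) = u := by omega
  rw [h1, List.range'_1_concat, List.reverse_append, h2]
  simp

lemma minPos_one {n : ℕ} (hn : 0 < n) :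
    (1:ℝ) ≤ minPos (1 : Matrix (Fin n) (Fin n) ℝ) := by
  apply le_minPos hn RowStochastic.one
  intro i j h
  by_cases hij : i = j
  · simp [Matrix.one_apply, hij]
  · simp [Matrix.one_apply, hij] at h

lemma backAcc_bound {n : ℕ} (hn : 0 < n) (A : ℕ → Matrix (Fin n) (Fin n) ℝ)
    (hstoch : ∀ s, RowStochastic (A s))
    {δ : ℝ} (hδ0 : 0 < δ) (hδ1 : δ ≤ 1) (hmin : ∀ s, δ ≤ minPos (A s))
    (s : ℕ) : ∀ k : ℕ, RowStochastic (backAcc A s (s + k)) ∧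
      δ ^ k ≤ minPos (backAcc A s (s + k)) := by
  intro k
  induction k with
  | zero =>
      have : backAcc A s s = 1 := by
        unfold backAcc
        simp
      simp only [Nat.add_zero, this]
      exact ⟨RowStochastic.one, by simpa using minPos_one hn⟩
  | succ k ih =>
      have hrec : backAcc A s (s + k + 1) = A (s + k) * backAcc A s (s + k) :=
        backAcc_succ A (Nat.le_add_right s k)
      have h1 : RowStochastic (A (s + k) * backAcc A s (s + k)) :=
        (hstoch (s + k)).mul ih.1
      constructor
      · rw [show s + (k+1) = s + k + 1 by ring, hrec]; exact h1
      · rw [show s + (k+1) = s + k + 1 by ring, hrec, pow_succ, mul_comm (δ^k) δ]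
        exact minPos_mul hn (hstoch (s+k)) ih.1 (le_of_lt hδ0)
          (pow_nonneg (le_of_lt hδ0) k) (hmin (s+k)) ih.2

/-- If `min⁺ A(t) ≥ δ > 0` for all `t` and the intercommunication intervals
satisfy `t (i+1) - t i ≤ a * log (log (i + 3))`, then
`∑ i, min⁺ A(t (i+1), t i) = ∞`: a growth of the intercommunication intervals
as quick as `log (log i)` still guarantees the divergence hypothesis of the
convergence theorem. -/
theorem statement18 {n : ℕ} (A : ℕ → Matrix (Fin n) (Fin n) ℝ)
    (hstoch : ∀ s, RowStochastic (A s))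
    (δ : ℝ) (hδ0 : 0 < δ) (hδ1 : δ < 1)
    (hmin : ∀ s, δ ≤ minPos (A s))
    (t : ℕ → ℕ) (ht0 : 0 < t 0) (hmono : StrictMono t)
    (a : ℝ) (ha : 0 < a)
    (hgap : ∀ i : ℕ, ((t (i + 1) : ℝ) - (t i : ℝ)) ≤ a * Real.log (Real.log (i + 3))) :
    Tendsto (fun N => ∑ i ∈ Finset.range N, minPos (backAcc A (t i) (t (i + 1))))
      atTop atTop := by
  -- n is positive
  have hn : 0 < n := by
    by_contra h
    push_neg at h
    interval_cases n
    have : minPos (A 0) = 0 := by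
      unfold minPos
      convert Real.sInf_empty
      ext x
      simp only [Set.mem_setOf_eq, Set.mem_empty_iff_false, iff_false, not_and]
      rintro - ⟨i, j, -⟩
      exact absurd i.2 (by omega)
    linarith [hmin 0]
  set term : ℕ → ℝ := fun i => minPos (backAcc A (t i) (t (i + 1))) with hterm
  -- lower bound: term i ≥ δ ^ (t (i+1) - t i)
  have hlb : ∀ i : ℕ, δ ^ (t (i+1) - t i) ≤ term i := by
    intro i
    have h1 : t i ≤ t (i+1) := le_of_lt (hmono (Nat.lt_succ_self i))
    have := (backAcc_bound hn A hstoch hδ0 (le_of_lt hδ1) hmin (t i) (t (i+1) - t i)).2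
    rwa [Nat.add_sub_cancel' h1] at this
  -- term i ≥ g i where g i = exp (log δ * (a * log (log (i+3))))
  set g : ℕ → ℝ := fun i => Real.exp (Real.log δ * (a * Real.log (Real.log (i + 3)))) with hg
  have hgpos : ∀ i, 0 < g i := fun i => Real.exp_pos _
  have hglb : ∀ i, g i ≤ term i := by
    intro i
    refine le_trans ?_ (hlb i)
    have hcast : ((t (i+1) - t i : ℕ) : ℝ) = (t (i+1) : ℝ) - (t i : ℝ) := by
      have h1 : t i ≤ t (i+1) := le_of_lt (hmono (Nat.lt_succ_self i))
      push_cast [h1]; ring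
    rw [← Real.exp_log hδ0, ← Real.exp_nat_mul]
    apply Real.exp_le_exp.2
    have hlogδ : Real.log δ < 0 := Real.log_neg hδ0 hδ1
    have : ((t (i+1) - t i : ℕ) : ℝ) ≤ a * Real.log (Real.log (i + 3)) := by
      rw [hcast]; exact hgap i
    nlinarith [this, hlogδ]
  have htermnonneg : ∀ i, 0 ≤ term i := fun i => le_of_lt (lt_of_lt_of_le (hgpos i) (hglb i))
  rw [← not_summable_iff_tendsto_nat_atTop_of_nonneg htermnonneg]
  intro hsum
  -- then g is summable
  have hgsum : Summable g :=
    Summable.of_nonneg_of_le (fun i => le_of_lt (hgpos i)) hglb hsum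
  -- but g i ≥ 1/(i+3) eventually
  set c : ℝ := -(a * Real.log δ) with hc
  have hcpos : 0 < c := by
    have : Real.log δ < 0 := Real.log_neg hδ0 hδ1
    rw [hc]; nlinarith
  -- g i = (log (i+3)) ^ (-c) as rpow
  have hgeq : ∀ i : ℕ, g i = Real.log ((i:ℝ) + 3) ^ (-c : ℝ) := by
    intro i
    have hl : (0:ℝ) < Real.log ((i:ℝ)+3) := by
      apply Real.log_pos
      have : (0:ℝ) ≤ (i:ℝ) := Nat.cast_nonneg i
      linarith
    rw [Real.rpow_def_of_pos hl, hg]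
    rw [hc]; ring_nf
  -- eventually (log (i+3))^c ≤ i+3
  have hev : ∀ᶠ x : ℝ in atTop, Real.log x ^ (c : ℝ) ≤ x := by
    have h1 : Real.log =o[atTop] fun x : ℝ => x ^ (1/c : ℝ) :=
      isLittleO_log_rpow_atTop (by positivity)
    have h2 : ∀ᶠ x : ℝ in atTop, ‖Real.log x‖ ≤ 1 * ‖x ^ (1/c : ℝ)‖ :=
      h1.bound one_pos
    filter_upwards [h2, eventually_ge_atTop (1:ℝ)] with x hx hx1
    have hx0 : (0:ℝ) < x := by linarith
    have hlog0 : 0 ≤ Real.log x := Real.log_nonneg hx1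
    have hrp0 : 0 ≤ x ^ (1/c : ℝ) := Real.rpow_nonneg (le_of_lt hx0) _
    have hle : Real.log x ≤ x ^ (1/c : ℝ) := by
      rw [Real.norm_eq_abs, Real.norm_eq_abs, abs_of_nonneg hlog0, abs_of_nonneg hrp0,
        one_mul] at hx
      exact hx
    calc Real.log x ^ (c:ℝ) ≤ (x ^ (1/c : ℝ)) ^ (c:ℝ) :=
          Real.rpow_le_rpow hlog0 hle (le_of_lt hcpos)
      _ = x := by
          rw [← Real.rpow_mul (le_of_lt hx0), one_div_mul_cancel (ne_of_gt hcpos),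
            Real.rpow_one]
  -- so eventually 1/(i+3) ≤ g i
  have hevn : ∀ᶠ i : ℕ in atTop, 1 / ((i:ℝ) + 3) ≤ g i := by
    have htend : Tendsto (fun i : ℕ => (i:ℝ) + 3) atTop atTop :=
      tendsto_atTop_add_const_right _ 3 tendsto_natCast_atTop_atTop
    filter_upwards [htend.eventually hev] with i hi
    have hl : (0:ℝ) < Real.log ((i:ℝ)+3) := by
      apply Real.log_pos
      have : (0:ℝ) ≤ (i:ℝ) := Nat.cast_nonneg i
      linarith
    have hpow : (0:ℝ) < Real.log ((i:ℝ)+3) ^ (c:ℝ) := Real.rpow_pos_of_pos hl _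
    rw [hgeq i, Real.rpow_neg (le_of_lt hl), one_div]
    exact inv_anti₀ hpow hi
  obtain ⟨N, hN⟩ := eventually_atTop.1 hevn
  have hsum2 : Summable (fun i : ℕ => 1 / ((i:ℝ) + 3)) := by
    rw [← summable_nat_add_iff N]
    apply Summable.of_nonneg_of_le (fun i => by positivity)
      (fun i => hN (i + N) (Nat.le_add_left N i))
    exact (summable_nat_add_iff N).2 hgsum
  have : Summable (fun i : ℕ => 1 / ((i:ℝ))) := by
    rw [← summable_nat_add_iff 3]
    convert hsum2 using 2 with i
    · rfl
    push_cast
    ring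
  exact Real.not_summable_one_div_natCast this
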